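/- Let a ∈ {-1,+1} and let m, m̂ ∈ ℝ^W be such that for every j, m_j = a·c_j for some c_j > 0. Let c_max = max_j c_j and c_min = min_j c_j. If |m̂_j - m_j| < (1/2)·(c_max + c_min) for every j, then for any index j* ∈ argmax_j |m̂_j| one has m̂_{j*} ≠ 0 and sign(m̂_{j*}) = a. -/
import Mathlib


/-- deterministic guarantee for the max-magnitude-entry estimator.
If `m j = a * c j` with `c j > 0`, and the entrywise error of `m̂` is strictly below
`(c_max + c_min)/2`, then any index maximizing `|m̂ j|` has `m̂ j ≠ 0` and `sign(m̂ j) = a`. -/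
theorem stmt_16 (W : ℕ) (hW : 0 < W) (a : ℝ) (ha : a = 1 ∨ a = -1)
    (m mhat c : Fin W → ℝ) (hc : ∀ j, 0 < c j) (hm : ∀ j, m j = a * c j)
    (hne : (Finset.univ : Finset (Fin W)).Nonempty)
    (herr : ∀ j, |mhat j - m j| <
      (1/2) * (Finset.univ.sup' hne c + Finset.univ.inf' hne c))
    (jstar : Fin W) (hjstar : ∀ j, |mhat j| ≤ |mhat jstar|) :
    mhat jstar ≠ 0 ∧ Real.sign (mhat jstar) = a := by
  set M := Finset.univ.sup' hne c with hMdef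
  set L := Finset.univ.inf' hne c with hLdef
  obtain ⟨j0, -, hj0⟩ := Finset.exists_mem_eq_sup' hne c
  have habs : |a| = 1 := by rcases ha with h | h <;> simp [h]
  have ha2 : a * a = 1 := by rcases ha with h | h <;> norm_num [h]
  have hLle : ∀ j, L ≤ c j := fun j => Finset.inf'_le _ (Finset.mem_univ j)
  have habsm : ∀ j, |m j| = c j := by
    intro j; rw [hm, abs_mul, habs, one_mul, abs_of_pos (hc j)]
  -- lower bound on |mhat j0|
  have h1 : (M - L) / 2 < |mhat j0| := by
    have hsub := abs_sub_abs_le_abs_sub (m j0) (mhat j0)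
    rw [abs_sub_comm] at hsub
    have he := herr j0
    have hm0 : |m j0| = M := by rw [habsm, ← hj0]
    linarith
  have hstar : (M - L) / 2 < |mhat jstar| := lt_of_lt_of_le h1 (hjstar j0)
  -- lower bound on a * mhat jstar
  have hd : a * (mhat jstar - m jstar) ≥ -|mhat jstar - m jstar| := by
    have := neg_abs_le (a * (mhat jstar - m jstar))
    rwa [abs_mul, habs, one_mul] at this
  have hident : a * mhat jstar = c jstar + a * (mhat jstar - m jstar) := by
    rw [hm jstar]; linear_combination c jstar * ha2
  have h3 : -(M - L) / 2 < a * mhat jstar := by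
    have he := herr jstar
    have := hLle jstar
    nlinarith
  have habsam : |a * mhat jstar| = |mhat jstar| := by
    rw [abs_mul, habs, one_mul]
  have key : 0 < a * mhat jstar := by
    rcases le_or_gt (a * mhat jstar) 0 with h | h
    · exfalso
      have : |a * mhat jstar| = -(a * mhat jstar) := abs_of_nonpos h
      rw [habsam] at this
      linarith
    · exact h
  constructor
  · intro h0
    rw [h0, mul_zero] at key
    exact lt_irrefl _ key
  · rcases ha with h | h
    · rw [h, one_mul] at key
      rw [Real.sign_of_pos key, h]
    · rw [h] at key
      have : mhat jstar < 0 := by linarith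
      rw [Real.sign_of_neg this, h]
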